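/- Let δ ∈ [0,1), D ∈ ℕ, (D_n) a sequence of natural numbers, and (a_n) a non-decreasing sequence of positive reals with limsup_{n→∞} a_n^{1/(D^n (n+δ)! ∏_{i=1}^{n−1} D_i)} = ∞ (interpreting (n+δ)! via the Gamma function). Then for infinitely many N: (i) a_{N+1}^{1/(D^{N+1}(N+1+δ)! ∏_{i=1}^{N} D_i)} > (1 + 1/N²) · max_{1≤n≤N} a_n^{1/(D^n (n+δ)! ∏_{i=1}^{n−1} D_i)}, and (ii) a_{N+1} > ((1 + 1/N²)^{D^N (N+1+δ)! ∏_{i=1}^{N−1} D_i} · ∏_{n=1}^N a_n^{n+δ})^{D·D_N}. -/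

import Mathlib

open Filter Real Finset

noncomputable def Ef (δ : ℝ) (D : ℕ) (Dn : ℕ → ℕ) (n : ℕ) : ℝ :=
  (D : ℝ) ^ n * Real.Gamma ((n : ℝ) + δ + 1) * ∏ i ∈ Finset.Ico 1 n, (Dn i : ℝ)

noncomputable def bf (δ : ℝ) (D : ℕ) (Dn : ℕ → ℕ) (a : ℕ → ℝ) (n : ℕ) : ℝ :=
  a n ^ (Ef δ D Dn n)⁻¹

lemma Ef_pos (δ : ℝ) (hδ0 : 0 ≤ δ) (D : ℕ) (hD : 1 ≤ D) (Dn : ℕ → ℕ) (hDn : ∀ n, 1 ≤ Dn n)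
    (n : ℕ) : 0 < Ef δ D Dn n := by
  have h1 : (0:ℝ) < (D:ℝ) ^ n := by positivity
  have h2 : 0 < Real.Gamma ((n : ℝ) + δ + 1) :=
    Real.Gamma_pos_of_pos (by positivity)
  have h3 : (0:ℝ) < ∏ i ∈ Finset.Ico 1 n, (Dn i : ℝ) := by
    apply Finset.prod_pos
    intro i _
    exact_mod_cast hDn i
  exact mul_pos (mul_pos h1 h2) h3

lemma bf_pos (δ : ℝ) (D : ℕ) (Dn : ℕ → ℕ) (a : ℕ → ℝ) (hpos : ∀ n, 0 < a n) (n : ℕ) :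
    0 < bf δ D Dn a n := Real.rpow_pos_of_pos (hpos n) _

lemma a_eq_bf_rpow (δ : ℝ) (hδ0 : 0 ≤ δ) (D : ℕ) (hD : 1 ≤ D) (Dn : ℕ → ℕ)
    (hDn : ∀ n, 1 ≤ Dn n) (a : ℕ → ℝ) (hpos : ∀ n, 0 < a n) (n : ℕ) :
    a n = (bf δ D Dn a n) ^ (Ef δ D Dn n) := by
  rw [bf, ← Real.rpow_mul (hpos n).le, inv_mul_cancel₀ (Ef_pos δ hδ0 D hD Dn hDn n).ne',
    Real.rpow_one]

lemma sum_inv_sq_aux : ∀ N : ℕ, 1 ≤ N →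
    ∑ k ∈ Finset.Ico 1 N, (1:ℝ) / (k:ℝ) ^ 2 ≤ 2 - 2 / (N:ℝ) := by
  intro N
  induction N with
  | zero => intro h; omega
  | succ n ih =>
    intro _
    rcases Nat.eq_or_lt_of_le (Nat.one_le_iff_ne_zero.mpr (Nat.succ_ne_zero n)) with h | h
    · have hn0 : n = 0 := by omega
      subst hn0; simp
    · have hn1 : 1 ≤ n := by omega
      have hnpos : (0:ℝ) < n := by exact_mod_cast hn1
      rw [Finset.sum_Ico_succ_top hn1]
      have := ih hn1
      have hcast : (1:ℝ) ≤ (n:ℝ) := by exact_mod_cast hn1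
      have hstep : (1:ℝ) / (n:ℝ)^2 ≤ 2 / (n:ℝ) - 2 / ((n:ℝ)+1) := by
        rw [div_sub_div _ _ hnpos.ne' (by positivity), div_le_div_iff₀ (by positivity) (by positivity)]
        nlinarith
      push_cast
      linarith

lemma sum_inv_sq (N : ℕ) : ∑ k ∈ Finset.Ico 1 N, (1:ℝ) / (k:ℝ) ^ 2 ≤ 2 := by
  rcases Nat.lt_or_ge N 1 with h | h
  · interval_cases N; simp
  · have := sum_inv_sq_aux N h
    have : (0:ℝ) ≤ 2 / (N:ℝ) := by positivity
    linarith [sum_inv_sq_aux N h]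

lemma gamma_telescope (δ : ℝ) (hδ0 : 0 ≤ δ) : ∀ N : ℕ,
    ∑ n ∈ Finset.Icc 1 N, (((n:ℝ) + δ) * Real.Gamma ((n:ℝ) + δ + 1))
      = Real.Gamma ((N:ℝ) + δ + 2) - Real.Gamma (δ + 2) := by
  intro N
  induction N with
  | zero => simp
  | succ n ih =>
    rw [Finset.sum_Icc_succ_top (by omega : 1 ≤ n + 1), ih]
    have harg : ((n+1:ℕ):ℝ) + δ + 1 = ((n:ℝ) + δ + 2) := by push_cast; ring
    have harg2 : ((n+1:ℕ):ℝ) + δ + 2 = ((n:ℝ) + δ + 2) + 1 := by push_cast; ring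
    rw [harg, harg2, Real.Gamma_add_one (by positivity : ((n:ℝ) + δ + 2) ≠ 0)]
    push_cast
    ring


/-- If limsup of `bf` (as EReal) is ⊤, no real eventual upper bound. -/
lemma no_bound (δ : ℝ) (D : ℕ) (Dn : ℕ → ℕ) (a : ℕ → ℝ)
    (hlim : Filter.limsup (fun n : ℕ => ((bf δ D Dn a n : ℝ) : EReal)) Filter.atTop = ⊤)
    (C : ℝ) (hC : ∀ᶠ n in Filter.atTop, bf δ D Dn a n ≤ C) : False := by
  have h : Filter.limsup (fun n : ℕ => ((bf δ D Dn a n : ℝ) : EReal)) Filter.atTop ≤ (C : EReal) :=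
    Filter.limsup_le_of_le (by isBoundedDefault)
      (hC.mono fun n hn => EReal.coe_le_coe_iff.mpr hn)
  rw [hlim] at h
  exact EReal.coe_ne_top C (top_le_iff.mp h)

lemma jump_infinite (δ : ℝ) (hδ0 : 0 ≤ δ) (D : ℕ) (hD : 1 ≤ D)
    (Dn : ℕ → ℕ) (hDn : ∀ n, 1 ≤ Dn n)
    (a : ℕ → ℝ) (hpos : ∀ n, 0 < a n)
    (hlim : Filter.limsup (fun n : ℕ => ((bf δ D Dn a n : ℝ) : EReal)) Filter.atTop = ⊤) :
    {N : ℕ | ∃ h1 : 1 ≤ N,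
      (1 + 1 / (N:ℝ) ^ 2) * (Finset.Icc 1 N).sup' (Finset.nonempty_Icc.mpr h1) (bf δ D Dn a)
        < bf δ D Dn a (N + 1)}.Infinite := by
  set b := bf δ D Dn a with hbdef
  have hbpos : ∀ n, 0 < b n := bf_pos δ D Dn a hpos
  by_contra hfin
  rw [Set.not_infinite] at hfin
  obtain ⟨K, hK⟩ := hfin.bddAbove
  set K' := K + 1 with hK'def
  have hK'1 : 1 ≤ K' := by omega
  -- define M
  have hne : ∀ N : ℕ, 1 ≤ N → (Finset.Icc 1 N).Nonempty := fun N h => Finset.nonempty_Icc.mpr h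
  classical
  set M : ℕ → ℝ := fun N => if h : 1 ≤ N then (Finset.Icc 1 N).sup' (hne N h) b else b 1 with hMdef
  have hMeq : ∀ N (h : 1 ≤ N), M N = (Finset.Icc 1 N).sup' (hne N h) b := by
    intro N h; simp [hMdef, dif_pos h]
  have hle_M : ∀ N (h : 1 ≤ N) n, n ∈ Finset.Icc 1 N → b n ≤ M N := by
    intro N h n hn; rw [hMeq N h]; exact Finset.le_sup' b hn
  have hMpos : ∀ N, 1 ≤ N → 0 < M N := by
    intro N h
    exact lt_of_lt_of_le (hbpos 1) (hle_M N h 1 (Finset.mem_Icc.mpr ⟨le_refl 1, h⟩))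
  have hfac : ∀ N : ℕ, (1:ℝ) ≤ 1 + 1 / (N:ℝ)^2 := by
    intro N
    have : (0:ℝ) ≤ 1 / (N:ℝ)^2 := by positivity
    linarith
  -- for N ≥ K', no jump
  have hstep : ∀ N, K' ≤ N → b (N + 1) ≤ (1 + 1/(N:ℝ)^2) * M N := by
    intro N hN
    have h1N : 1 ≤ N := le_trans hK'1 hN
    have hnotmem : N ∉ {N : ℕ | ∃ h1 : 1 ≤ N,
        (1 + 1 / (N:ℝ) ^ 2) * (Finset.Icc 1 N).sup' (Finset.nonempty_Icc.mpr h1) b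
          < b (N + 1)} := by
      intro hmem
      exact absurd (hK hmem) (by omega)
    rw [Set.mem_setOf_eq] at hnotmem
    push_neg at hnotmem
    have := hnotmem h1N
    rw [← hMeq N h1N] at this
    exact this
  have hMstep : ∀ N, K' ≤ N → M (N + 1) ≤ (1 + 1/(N:ℝ)^2) * M N := by
    intro N hN
    have h1N : 1 ≤ N := le_trans hK'1 hN
    rw [hMeq (N+1) (by omega)]
    apply Finset.sup'_le
    intro n hn
    rcases Finset.mem_Icc.mp hn with ⟨hn1, hn2⟩
    rcases Nat.lt_or_ge n (N+1) with h | h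
    · calc b n ≤ M N := hle_M N h1N n (Finset.mem_Icc.mpr ⟨hn1, by omega⟩)
        _ ≤ (1 + 1/(N:ℝ)^2) * M N := le_mul_of_one_le_left (hMpos N h1N).le (hfac N)
    · have : n = N + 1 := by omega
      rw [this]; exact hstep N hN
  have hMgrow : ∀ N, K' ≤ N → M N ≤ M K' * ∏ k ∈ Finset.Ico K' N, (1 + 1/(k:ℝ)^2) := by
    intro N hN
    induction N, hN using Nat.le_induction with
    | base => simp
    | succ N hKN ih =>
      have h1N : 1 ≤ N := le_trans hK'1 hKN
      calc M (N+1) ≤ (1 + 1/(N:ℝ)^2) * M N := hMstep N hKN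
        _ ≤ (1 + 1/(N:ℝ)^2) * (M K' * ∏ k ∈ Finset.Ico K' N, (1 + 1/(k:ℝ)^2)) := by
            apply mul_le_mul_of_nonneg_left ih (by positivity)
        _ = M K' * ∏ k ∈ Finset.Ico K' (N+1), (1 + 1/(k:ℝ)^2) := by
            rw [Finset.prod_Ico_succ_top hKN]; ring
  have hprodbd : ∀ N : ℕ, ∏ k ∈ Finset.Ico K' N, (1 + 1/(k:ℝ)^2) ≤ Real.exp 2 := by
    intro N
    calc ∏ k ∈ Finset.Ico K' N, (1 + 1/(k:ℝ)^2)
        ≤ ∏ k ∈ Finset.Ico K' N, Real.exp (1/(k:ℝ)^2) := by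
          apply Finset.prod_le_prod
          · intro k _; positivity
          · intro k _
            have := Real.add_one_le_exp (1/(k:ℝ)^2)
            linarith
      _ = Real.exp (∑ k ∈ Finset.Ico K' N, 1/(k:ℝ)^2) := by rw [Real.exp_sum]
      _ ≤ Real.exp 2 := by
          apply Real.exp_le_exp.mpr
          calc ∑ k ∈ Finset.Ico K' N, 1/(k:ℝ)^2
              ≤ ∑ k ∈ Finset.Ico 1 N, 1/(k:ℝ)^2 := by
                apply Finset.sum_le_sum_of_subset_of_nonneg
                · exact Finset.Ico_subset_Ico hK'1 le_rfl
                · intro k _ _; positivity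
            _ ≤ 2 := sum_inv_sq N
  apply no_bound δ D Dn a hlim (M K' * Real.exp 2)
  filter_upwards [Filter.eventually_ge_atTop (K'+1)] with n hn
  have h1n : 1 ≤ n := by omega
  calc b n ≤ M n := hle_M n h1n n (Finset.mem_Icc.mpr ⟨h1n, le_refl n⟩)
    _ ≤ M K' * ∏ k ∈ Finset.Ico K' n, (1 + 1/(k:ℝ)^2) := hMgrow n (by omega)
    _ ≤ M K' * Real.exp 2 :=
        mul_le_mul_of_nonneg_left (hprodbd n) (hMpos K' hK'1).le


lemma step2 (δ : ℝ) (hδ0 : 0 ≤ δ) (D : ℕ) (hD : 1 ≤ D) (Dn : ℕ → ℕ) (hDn : ∀ n, 1 ≤ Dn n)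
    (a : ℕ → ℝ) (hpos : ∀ n, 0 < a n) (N : ℕ) (h1 : 1 ≤ N)
    (hM1 : 1 ≤ (Finset.Icc 1 N).sup' (Finset.nonempty_Icc.mpr h1) (bf δ D Dn a))
    (hi : (1 + 1/(N:ℝ)^2) * (Finset.Icc 1 N).sup' (Finset.nonempty_Icc.mpr h1) (bf δ D Dn a)
      < bf δ D Dn a (N+1)) :
    a (N + 1) >
      ((1 + 1 / (N : ℝ) ^ 2) ^ ((D : ℝ) ^ N * Real.Gamma ((N : ℝ) + 1 + δ + 1) *
            ∏ i ∈ Finset.Ico 1 N, (Dn i : ℝ)) *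
          ∏ n ∈ Finset.Icc 1 N, a n ^ ((n : ℝ) + δ)) ^ ((D * Dn N : ℕ) : ℝ) := by
  set b := bf δ D Dn a with hbdef
  set M : ℝ := (Finset.Icc 1 N).sup' (Finset.nonempty_Icc.mpr h1) b with hMdef
  set F : ℝ := (D : ℝ) ^ N * Real.Gamma ((N : ℝ) + 1 + δ + 1) *
      ∏ i ∈ Finset.Ico 1 N, (Dn i : ℝ) with hFdef
  set q : ℝ := ((D * Dn N : ℕ) : ℝ) with hqdef
  set s : ℝ := 1 + 1 / (N : ℝ) ^ 2 with hsdef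
  have hs : (0:ℝ) < s := by rw [hsdef]; positivity
  have hq : (0:ℝ) < q := by
    rw [hqdef]
    have : 1 ≤ D * Dn N :=
      Nat.one_le_iff_ne_zero.mpr (Nat.mul_ne_zero (by omega) (by have := hDn N; omega))
    exact_mod_cast this
  have hMpos : (0:ℝ) < M := lt_of_lt_of_le one_pos hM1
  have hGpos : 0 < Real.Gamma ((N : ℝ) + 1 + δ + 1) := Real.Gamma_pos_of_pos (by positivity)
  have hProdpos : (0:ℝ) < ∏ i ∈ Finset.Ico 1 N, (Dn i : ℝ) := by
    apply Finset.prod_pos; intro i _; exact_mod_cast hDn i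
  have hF : (0:ℝ) < F := by rw [hFdef]; positivity
  -- E (N+1) = F * q
  have hEN1 : Ef δ D Dn (N+1) = F * q := by
    rw [Ef, Finset.prod_Ico_succ_top h1, hFdef, hqdef]
    have harg : ((N+1:ℕ):ℝ) + δ + 1 = (N:ℝ) + 1 + δ + 1 := by push_cast; ring
    rw [harg]
    push_cast
    ring
  have hEN1pos : 0 < Ef δ D Dn (N+1) := Ef_pos δ hδ0 D hD Dn hDn (N+1)
  -- main strict inequality after raising to power E(N+1)
  have hbig : (s * M) ^ (Ef δ D Dn (N+1)) < a (N+1) := by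
    rw [a_eq_bf_rpow δ hδ0 D hD Dn hDn a hpos (N+1)]
    exact Real.rpow_lt_rpow (by positivity) hi hEN1pos
  -- key: products of a's bounded by M^F
  have hsum : ∑ n ∈ Finset.Icc 1 N, Ef δ D Dn n * ((n:ℝ) + δ) ≤ F := by
    have hterm : ∀ n ∈ Finset.Icc 1 N, Ef δ D Dn n * ((n:ℝ) + δ)
        ≤ ((D:ℝ)^N * ∏ i ∈ Finset.Ico 1 N, (Dn i : ℝ)) *
            (((n:ℝ) + δ) * Real.Gamma ((n:ℝ) + δ + 1)) := by
      intro n hn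
      rcases Finset.mem_Icc.mp hn with ⟨hn1, hn2⟩
      rw [Ef]
      have hDpow : (D:ℝ)^n ≤ (D:ℝ)^N := by
        apply pow_le_pow_right₀ (by exact_mod_cast hD) hn2
      have hprodle : ∏ i ∈ Finset.Ico 1 n, (Dn i : ℝ) ≤ ∏ i ∈ Finset.Ico 1 N, (Dn i : ℝ) := by
        rw [← Nat.cast_prod, ← Nat.cast_prod]
        exact_mod_cast Finset.prod_le_prod_of_subset_of_one_le'
          (Finset.Ico_subset_Ico le_rfl hn2) (fun i _ _ => hDn i)
      have hg : 0 < Real.Gamma ((n:ℝ) + δ + 1) := Real.Gamma_pos_of_pos (by positivity)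
      have hprodpos : (0:ℝ) < ∏ i ∈ Finset.Ico 1 n, (Dn i : ℝ) := by
        apply Finset.prod_pos; intro i _; exact_mod_cast hDn i
      have hnd : (0:ℝ) ≤ (n:ℝ) + δ := by positivity
      calc (D:ℝ)^n * Real.Gamma ((n:ℝ)+δ+1) * (∏ i ∈ Finset.Ico 1 n, (Dn i : ℝ)) * ((n:ℝ)+δ)
          ≤ (D:ℝ)^N * Real.Gamma ((n:ℝ)+δ+1) * (∏ i ∈ Finset.Ico 1 N, (Dn i : ℝ)) * ((n:ℝ)+δ) := by
            apply mul_le_mul_of_nonneg_right _ hnd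
            apply mul_le_mul (mul_le_mul hDpow le_rfl hg.le (by positivity)) hprodle hprodpos.le
              (by positivity)
        _ = ((D:ℝ)^N * ∏ i ∈ Finset.Ico 1 N, (Dn i : ℝ)) * (((n:ℝ)+δ) * Real.Gamma ((n:ℝ)+δ+1)) := by
            ring
    calc ∑ n ∈ Finset.Icc 1 N, Ef δ D Dn n * ((n:ℝ) + δ)
        ≤ ∑ n ∈ Finset.Icc 1 N, ((D:ℝ)^N * ∏ i ∈ Finset.Ico 1 N, (Dn i : ℝ)) *
            (((n:ℝ) + δ) * Real.Gamma ((n:ℝ) + δ + 1)) := Finset.sum_le_sum hterm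
      _ = ((D:ℝ)^N * ∏ i ∈ Finset.Ico 1 N, (Dn i : ℝ)) *
            ∑ n ∈ Finset.Icc 1 N, (((n:ℝ) + δ) * Real.Gamma ((n:ℝ) + δ + 1)) := by
            rw [Finset.mul_sum]
      _ ≤ ((D:ℝ)^N * ∏ i ∈ Finset.Ico 1 N, (Dn i : ℝ)) * Real.Gamma ((N:ℝ) + δ + 2) := by
            apply mul_le_mul_of_nonneg_left _ (mul_nonneg (by positivity) hProdpos.le)
            rw [gamma_telescope δ hδ0 N]
            have : 0 < Real.Gamma (δ + 2) := Real.Gamma_pos_of_pos (by positivity)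
            linarith
      _ = F := by
            rw [hFdef]
            have : (N:ℝ) + 1 + δ + 1 = (N:ℝ) + δ + 2 := by ring
            rw [this]; ring
  have hP : ∏ n ∈ Finset.Icc 1 N, a n ^ ((n:ℝ) + δ) ≤ M ^ F := by
    calc ∏ n ∈ Finset.Icc 1 N, a n ^ ((n:ℝ) + δ)
        ≤ ∏ n ∈ Finset.Icc 1 N, M ^ (Ef δ D Dn n * ((n:ℝ) + δ)) := by
          apply Finset.prod_le_prod
          · intro n _; exact Real.rpow_nonneg (hpos n).le _
          · intro n hn
            rcases Finset.mem_Icc.mp hn with ⟨hn1, hn2⟩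
            have hb_le : b n ≤ M := Finset.le_sup' b hn
            have han : a n ≤ M ^ (Ef δ D Dn n) := by
              rw [a_eq_bf_rpow δ hδ0 D hD Dn hDn a hpos n]
              exact Real.rpow_le_rpow (bf_pos δ D Dn a hpos n).le hb_le
                (Ef_pos δ hδ0 D hD Dn hDn n).le
            calc a n ^ ((n:ℝ) + δ) ≤ (M ^ (Ef δ D Dn n)) ^ ((n:ℝ) + δ) :=
                  Real.rpow_le_rpow (hpos n).le han (by positivity)
              _ = M ^ (Ef δ D Dn n * ((n:ℝ) + δ)) := by
                  rw [← Real.rpow_mul hMpos.le]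
      _ = M ^ (∑ n ∈ Finset.Icc 1 N, Ef δ D Dn n * ((n:ℝ) + δ)) := by
          rw [Real.rpow_sum_of_pos hMpos]
      _ ≤ M ^ F := Real.rpow_le_rpow_of_exponent_le hM1 hsum
  have hPpos : (0:ℝ) < ∏ n ∈ Finset.Icc 1 N, a n ^ ((n:ℝ) + δ) := by
    apply Finset.prod_pos; intro n _; exact Real.rpow_pos_of_pos (hpos n) _
  calc (s ^ F * ∏ n ∈ Finset.Icc 1 N, a n ^ ((n:ℝ) + δ)) ^ q
      = (s ^ F) ^ q * (∏ n ∈ Finset.Icc 1 N, a n ^ ((n:ℝ) + δ)) ^ q := by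
        rw [Real.mul_rpow (by positivity) hPpos.le]
    _ ≤ (s ^ F) ^ q * (M ^ F) ^ q := by
        apply mul_le_mul_of_nonneg_left (Real.rpow_le_rpow hPpos.le hP hq.le) (by positivity)
    _ = (s * M) ^ (F * q) := by
        rw [Real.rpow_mul (mul_nonneg hs.le hMpos.le), Real.mul_rpow hs.le hMpos.le,
          Real.mul_rpow (Real.rpow_nonneg hs.le F) (Real.rpow_nonneg hMpos.le F)]
    _ = (s * M) ^ (Ef δ D Dn (N+1)) := by rw [hEN1]
    _ < a (N+1) := hbig


/-- large-jump lemma for sequences whose normalized roots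
`a_n^{1/(D^n (n+δ)! ∏_{i<n} D_i)}` are unbounded, where `(n+δ)! = Γ(n+δ+1)`. -/
theorem stmt10 (δ : ℝ) (hδ0 : 0 ≤ δ) (hδ1 : δ < 1) (D : ℕ) (hD : 1 ≤ D)
    (Dn : ℕ → ℕ) (hDn : ∀ n, 1 ≤ Dn n)
    (a : ℕ → ℝ) (hpos : ∀ n, 0 < a n) (hmono : Monotone a)
    (hlim : Filter.limsup
        (fun n : ℕ =>
          ((a n ^ ((D : ℝ) ^ n * Real.Gamma ((n : ℝ) + δ + 1) *
              ∏ i ∈ Finset.Ico 1 n, (Dn i : ℝ))⁻¹ : ℝ) : EReal))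
        Filter.atTop = ⊤) :
    {N : ℕ | ∃ h1 : 1 ≤ N,
      a (N + 1) ^ ((D : ℝ) ^ (N + 1) * Real.Gamma ((N : ℝ) + 1 + δ + 1) *
            ∏ i ∈ Finset.Ico 1 (N + 1), (Dn i : ℝ))⁻¹ >
          (1 + 1 / (N : ℝ) ^ 2) *
            (Finset.Icc 1 N).sup' (Finset.nonempty_Icc.mpr h1)
              (fun n => a n ^ ((D : ℝ) ^ n * Real.Gamma ((n : ℝ) + δ + 1) *
                ∏ i ∈ Finset.Ico 1 n, (Dn i : ℝ))⁻¹) ∧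
      a (N + 1) >
        ((1 + 1 / (N : ℝ) ^ 2) ^ ((D : ℝ) ^ N * Real.Gamma ((N : ℝ) + 1 + δ + 1) *
              ∏ i ∈ Finset.Ico 1 N, (Dn i : ℝ)) *
            ∏ n ∈ Finset.Icc 1 N, a n ^ ((n : ℝ) + δ)) ^ ((D * Dn N : ℕ) : ℝ)}.Infinite := by
  have hlim' : Filter.limsup (fun n : ℕ => ((bf δ D Dn a n : ℝ) : EReal)) Filter.atTop = ⊤ :=
    hlim
  obtain ⟨m, hm1, hmgt⟩ : ∃ m, 1 ≤ m ∧ 1 < bf δ D Dn a m := by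
    by_contra h
    push_neg at h
    apply no_bound δ D Dn a hlim' 1
    filter_upwards [Filter.eventually_ge_atTop 1] with n hn
    exact h n hn
  have hinf := jump_infinite δ hδ0 D hD Dn hDn a hpos hlim'
  have hinf2 := hinf.diff (Set.finite_lt_nat m)
  apply Set.Infinite.mono _ hinf2
  intro N hN
  obtain ⟨hmem, hNm⟩ := hN
  obtain ⟨h1, hjump⟩ := hmem
  have hmN : m ≤ N := not_lt.mp hNm
  have hM1 : 1 ≤ (Finset.Icc 1 N).sup' (Finset.nonempty_Icc.mpr h1) (bf δ D Dn a) :=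
    le_trans hmgt.le (Finset.le_sup' (bf δ D Dn a) (Finset.mem_Icc.mpr ⟨hm1, hmN⟩))
  refine ⟨h1, ?_, ?_⟩
  · have hEcast : (D : ℝ) ^ (N + 1) * Real.Gamma ((N : ℝ) + 1 + δ + 1) *
        ∏ i ∈ Finset.Ico 1 (N + 1), (Dn i : ℝ) = Ef δ D Dn (N + 1) := by
      rw [Ef]; push_cast; ring
    rw [hEcast]
    exact hjump
  · exact step2 δ hδ0 D hD Dn hDn a hpos N h1 hM1 hjump
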